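/- Let P ∈ ℝ^{n×r}, Q ∈ ℝ^{ℓ×n}, R ∈ ℝ^{ℓ×r}, C ∈ ℝ^{p×n}; assume 𝒜 := { A : R = Q A P } is nonempty. Let 𝓛* ⊆ ℝ^r be a subspace such that R(𝓛*) ⊆ QP(𝓛*) and CP(𝓛*) = {0}, and such that 𝓛* contains every subspace 𝓛 ⊆ ℝ^r with R(𝓛) ⊆ QP(𝓛) and CP(𝓛) = {0}. Then the pair (C,A) is observable for all A ∈ 𝒜 (i.e., for every A ∈ 𝒜 and every x₀ ∈ ℝ^n, C A^t x₀ = 0 for all t ∈ ℕ implies x₀ = 0) if and only if ker C ⊆ im P and 𝓛* ⊆ ker P. -/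

import Mathlib

open Matrix

/-- geometric characterization of observability of (C,A) for all A ∈ 𝒜. -/
theorem observable_all_iff_geometric (n r l p : ℕ)
    (P : Matrix (Fin n) (Fin r) ℝ) (Q : Matrix (Fin l) (Fin n) ℝ)
    (R : Matrix (Fin l) (Fin r) ℝ) (C : Matrix (Fin p) (Fin n) ℝ)
    (hne : ∃ A : Matrix (Fin n) (Fin n) ℝ, R = Q * A * P)
    (Lstar : Submodule ℝ (Fin r → ℝ))
    (hL1 : Submodule.map R.mulVecLin Lstar ≤ Submodule.map (Q * P).mulVecLin Lstar)
    (hL2 : Submodule.map (C * P).mulVecLin Lstar = ⊥)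
    (hLmax : ∀ L : Submodule ℝ (Fin r → ℝ),
      Submodule.map R.mulVecLin L ≤ Submodule.map (Q * P).mulVecLin L →
      Submodule.map (C * P).mulVecLin L = ⊥ → L ≤ Lstar) :
    (∀ A : Matrix (Fin n) (Fin n) ℝ, R = Q * A * P →
        ∀ x₀ : Fin n → ℝ, (∀ t : ℕ, C.mulVec ((A ^ t).mulVec x₀) = 0) → x₀ = 0) ↔
      (LinearMap.ker C.mulVecLin ≤ LinearMap.range P.mulVecLin ∧
        Lstar ≤ LinearMap.ker P.mulVecLin) := by
  obtain ⟨A₀, hA₀⟩ := hne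
  have hRfact : ∀ w : Fin r → ℝ, R.mulVec w = Q.mulVec (A₀.mulVec (P.mulVec w)) := by
    intro w
    rw [hA₀, Matrix.mulVec_mulVec, Matrix.mulVec_mulVec]
  constructor
  · intro hobs
    constructor
    · -- ker C ≤ range P
      intro x hx
      by_contra hxP
      have hx0 : C.mulVec x = 0 := hx
      set U := LinearMap.range P.mulVecLin with hU
      have hq : U.mkQ x ≠ 0 := by
        simpa [Submodule.Quotient.mk_eq_zero] using hxP
      obtain ⟨φ, hφ⟩ : ∃ φ : Module.Dual ℝ ((Fin n → ℝ) ⧸ U), φ (U.mkQ x) ≠ 0 := by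
        by_contra hcon
        push_neg at hcon
        exact hq ((Module.forall_dual_apply_eq_zero_iff ℝ _).mp hcon)
      set f : (Fin n → ℝ) →ₗ[ℝ] ℝ := (φ (U.mkQ x))⁻¹ • (φ ∘ₗ U.mkQ) with hf
      have hfx : f x = 1 := by
        simp only [hf, LinearMap.smul_apply, LinearMap.coe_comp, Function.comp_apply,
          smul_eq_mul]
        field_simp
      have hfP : ∀ w, f (P.mulVec w) = 0 := by
        intro w
        have hmem : P.mulVec w ∈ U := ⟨w, rfl⟩
        have : U.mkQ (P.mulVec w) = 0 := (Submodule.Quotient.mk_eq_zero _).mpr hmem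
        simp [hf, this]
      set Elin : (Fin n → ℝ) →ₗ[ℝ] (Fin n → ℝ) :=
        A₀.mulVecLin - LinearMap.smulRight f (A₀.mulVec x) with hE
      set A : Matrix (Fin n) (Fin n) ℝ := LinearMap.toMatrix' Elin with hAdef
      have hAapp : ∀ y, A.mulVec y = A₀.mulVec y - f y • A₀.mulVec x := by
        intro y
        have h1 : Matrix.toLin' A y = Elin y :=
          LinearMap.congr_fun (Matrix.toLin'_toMatrix' Elin) y
        simpa [hE, Matrix.toLin'_apply, Matrix.mulVecLin_apply] using h1
      have hA : R = Q * A * P := by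
        apply Matrix.toLin'.injective
        apply LinearMap.ext
        intro w
        show R.mulVec w = (Q * A * P).mulVec w
        rw [← Matrix.mulVec_mulVec, ← Matrix.mulVec_mulVec, hAapp, hfP]
        rw [hRfact]
        simp
      have hAx : A.mulVec x = 0 := by
        rw [hAapp, hfx, one_smul, sub_self]
      have hx' : x = 0 := by
        refine hobs A hA x ?_
        intro t
        cases t with
        | zero => simpa using hx0
        | succ t =>
          rw [pow_succ, ← Matrix.mulVec_mulVec, hAx, Matrix.mulVec_zero, Matrix.mulVec_zero]
      exact hxP (hx' ▸ U.zero_mem)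
    · -- Lstar ≤ ker P
      intro v hv
      by_contra hPv
      have hPv' : P.mulVec v ≠ 0 := by
        intro hcon
        exact hPv (LinearMap.mem_ker.mpr (by simpa [Matrix.mulVecLin_apply] using hcon))
      set W := Submodule.map P.mulVecLin Lstar with hWdef
      -- construction of σ with P ∘ σ = id on range P
      obtain ⟨Uc, hUc⟩ := Submodule.exists_isCompl (LinearMap.range P.mulVecLin)
      set πP := Submodule.linearProjOfIsCompl _ Uc hUc with hπP
      obtain ⟨σ₀, hσ₀⟩ := P.mulVecLin.rangeRestrict.exists_rightInverse_of_surjective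
        P.mulVecLin.range_rangeRestrict
      set σ : (Fin n → ℝ) →ₗ[ℝ] (Fin r → ℝ) := σ₀ ∘ₗ πP with hσ
      have hPσ : ∀ x, x ∈ LinearMap.range P.mulVecLin → P.mulVec (σ x) = x := by
        intro x hx
        have h1 : πP x = ⟨x, hx⟩ :=
          Submodule.linearProjOfIsCompl_apply_left hUc ⟨x, hx⟩
        have h2 : P.mulVecLin.rangeRestrict (σ₀ ⟨x, hx⟩) = ⟨x, hx⟩ :=
          LinearMap.congr_fun hσ₀ ⟨x, hx⟩
        have h3 : P.mulVec (σ₀ ⟨x, hx⟩) = x := congrArg Subtype.val h2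
        simp only [hσ, LinearMap.coe_comp, Function.comp_apply, h1]
        exact h3
      set S : (Fin n → ℝ) →ₗ[ℝ] (Fin l → ℝ) := R.mulVecLin ∘ₗ σ with hS
      have hSapp : ∀ x, S x = R.mulVec (σ x) := fun x => rfl
      have hkerPR : ∀ w : Fin r → ℝ, P.mulVec w = 0 → R.mulVec w = 0 := by
        intro w hw
        rw [hRfact, hw, Matrix.mulVec_zero, Matrix.mulVec_zero]
      have hSP : ∀ w, S (P.mulVec w) = R.mulVec w := by
        intro w
        have h1 : P.mulVec (σ (P.mulVec w)) = P.mulVec w := hPσ _ ⟨w, rfl⟩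
        have h2 : P.mulVec (σ (P.mulVec w) - w) = 0 := by
          rw [Matrix.mulVec_sub, h1, sub_self]
        have h3 := hkerPR _ h2
        rw [Matrix.mulVec_sub, sub_eq_zero] at h3
        rw [hSapp, h3]
      set B : (Fin n → ℝ) →ₗ[ℝ] (Fin n → ℝ) := A₀.mulVecLin ∘ₗ P.mulVecLin ∘ₗ σ with hB
      have hQB : ∀ x, Q.mulVec (B x) = S x := by
        intro x
        show Q.mulVec (A₀.mulVec (P.mulVec (σ x))) = R.mulVec (σ x)
        exact (hRfact (σ x)).symm
      set QW : W →ₗ[ℝ] (Fin l → ℝ) := Q.mulVecLin ∘ₗ W.subtype with hQW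
      have hSW : ∀ w : W, S (w : Fin n → ℝ) ∈ LinearMap.range QW := by
        rintro ⟨w, hw⟩
        obtain ⟨u, hu, rfl⟩ := hw
        have h1 : R.mulVecLin u ∈ Submodule.map (Q * P).mulVecLin Lstar :=
          hL1 ⟨u, hu, rfl⟩
        obtain ⟨u', hu', hqu⟩ := h1
        refine ⟨⟨P.mulVec u', ⟨u', hu', rfl⟩⟩, ?_⟩
        show Q.mulVec (P.mulVec u') = S (P.mulVecLin u)
        have h2 : S (P.mulVecLin u) = R.mulVec u := hSP u
        rw [h2, Matrix.mulVec_mulVec]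
        simpa [Matrix.mulVecLin_apply] using hqu
      obtain ⟨τ, hτ⟩ := QW.rangeRestrict.exists_rightInverse_of_surjective
        QW.range_rangeRestrict
      set h : W →ₗ[ℝ] W :=
        τ ∘ₗ (LinearMap.codRestrict (LinearMap.range QW) (S ∘ₗ W.subtype) (fun w => hSW w))
        with hh
      have hQh : ∀ w : W, Q.mulVec ((h w : Fin n → ℝ)) = S (w : Fin n → ℝ) := by
        intro w
        have h1 : QW.rangeRestrict (τ ⟨S (w : Fin n → ℝ), hSW w⟩)
            = ⟨S (w : Fin n → ℝ), hSW w⟩ :=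
          LinearMap.congr_fun hτ _
        have h2 : QW (τ ⟨S (w : Fin n → ℝ), hSW w⟩) = S (w : Fin n → ℝ) :=
          congrArg Subtype.val h1
        exact h2
      obtain ⟨Wc, hWc⟩ := Submodule.exists_isCompl W
      set πW := Submodule.linearProjOfIsCompl W Wc hWc with hπW
      set Alin : (Fin n → ℝ) →ₗ[ℝ] (Fin n → ℝ) :=
        W.subtype ∘ₗ h ∘ₗ πW + B ∘ₗ (LinearMap.id - W.subtype ∘ₗ πW) with hAlin
      have hAlinApp : ∀ x, Alin x = (h (πW x) : Fin n → ℝ) + B (x - (πW x : Fin n → ℝ)) :=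
        fun x => rfl
      have hQA : ∀ x, Q.mulVec (Alin x) = S x := by
        intro x
        rw [hAlinApp, Matrix.mulVec_add, hQh, hQB, map_sub]
        abel
      have hAinv : ∀ w, w ∈ W → Alin w ∈ W := by
        intro w hw
        rw [hAlinApp]
        have h1 : πW w = ⟨w, hw⟩ :=
          Submodule.linearProjOfIsCompl_apply_left hWc ⟨w, hw⟩
        rw [h1]
        have : w - ((⟨w, hw⟩ : W) : Fin n → ℝ) = 0 := sub_self w
        rw [this, map_zero, add_zero]
        exact (h ⟨w, hw⟩).2
      set A : Matrix (Fin n) (Fin n) ℝ := LinearMap.toMatrix' Alin with hAdef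
      have hAmul : ∀ y, A.mulVec y = Alin y := by
        intro y
        exact LinearMap.congr_fun (Matrix.toLin'_toMatrix' Alin) y
      have hA : R = Q * A * P := by
        apply Matrix.toLin'.injective
        apply LinearMap.ext
        intro w
        show R.mulVec w = (Q * A * P).mulVec w
        rw [← Matrix.mulVec_mulVec, ← Matrix.mulVec_mulVec, hAmul, hQA, hSP]
      have hWC : ∀ w, w ∈ W → C.mulVec w = 0 := by
        rintro _ ⟨u, hu, rfl⟩
        have h1 : (C * P).mulVecLin u ∈ Submodule.map (C * P).mulVecLin Lstar :=
          ⟨u, hu, rfl⟩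
        rw [hL2, Submodule.mem_bot] at h1
        have h2 : C.mulVec (P.mulVec u) = 0 := by
          rw [Matrix.mulVec_mulVec]
          simpa [Matrix.mulVecLin_apply] using h1
        simpa [Matrix.mulVecLin_apply] using h2
      have hmemW : ∀ t : ℕ, (A ^ t).mulVec (P.mulVec v) ∈ W := by
        intro t
        induction t with
        | zero => rw [pow_zero, Matrix.one_mulVec]; exact (⟨v, hv, rfl⟩ :
            P.mulVec v ∈ W)
        | succ t ih =>
          rw [pow_succ', ← Matrix.mulVec_mulVec, hAmul]
          exact hAinv _ ih
      have hx0 : P.mulVec v = 0 := by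
        refine hobs A hA (P.mulVec v) ?_
        intro t
        exact hWC _ (hmemW t)
      exact hPv' hx0
  · rintro ⟨hker, hLP⟩ A hA x₀ hx₀
    set N : Submodule ℝ (Fin n → ℝ) :=
      ⨅ t : ℕ, LinearMap.ker ((C * A ^ t).mulVecLin) with hN
    have hmemN : ∀ x, x ∈ N ↔ ∀ t, C.mulVec ((A ^ t).mulVec x) = 0 := by
      intro x
      simp only [hN, Submodule.mem_iInf, LinearMap.mem_ker, Matrix.mulVecLin_apply,
        ← Matrix.mulVec_mulVec]
    have hNC : ∀ x, x ∈ N → C.mulVec x = 0 := by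
      intro x hx
      have := (hmemN x).mp hx 0
      simpa [Matrix.one_mulVec] using this
    have hNA : ∀ x, x ∈ N → A.mulVec x ∈ N := by
      intro x hx
      rw [hmemN]
      intro t
      have := (hmemN x).mp hx (t + 1)
      rwa [pow_succ, ← Matrix.mulVec_mulVec] at this
    set L : Submodule ℝ (Fin r → ℝ) := Submodule.comap P.mulVecLin N with hLdef
    have h1 : Submodule.map R.mulVecLin L ≤ Submodule.map (Q * P).mulVecLin L := by
      rintro _ ⟨u, hu, rfl⟩
      have hPu : P.mulVec u ∈ N := hu
      have hAPu : A.mulVec (P.mulVec u) ∈ N := hNA _ hPu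
      have hkerC : A.mulVec (P.mulVec u) ∈ LinearMap.ker C.mulVecLin := by
        rw [LinearMap.mem_ker]
        simpa [Matrix.mulVecLin_apply] using hNC _ hAPu
      obtain ⟨w, hw⟩ := hker hkerC
      refine ⟨w, ?_, ?_⟩
      · show P.mulVec w ∈ N
        have : P.mulVec w = A.mulVec (P.mulVec u) := by
          simpa [Matrix.mulVecLin_apply] using hw
        rw [this]; exact hAPu
      · show (Q * P).mulVecLin w = R.mulVecLin u
        have hPw : P.mulVec w = A.mulVec (P.mulVec u) := by
          simpa [Matrix.mulVecLin_apply] using hw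
        simp only [Matrix.mulVecLin_apply]
        rw [← Matrix.mulVec_mulVec, hPw, Matrix.mulVec_mulVec, Matrix.mulVec_mulVec, ← hA]
    have h2 : Submodule.map (C * P).mulVecLin L = ⊥ := by
      rw [Submodule.eq_bot_iff]
      rintro _ ⟨u, hu, rfl⟩
      have hPu : P.mulVec u ∈ N := hu
      simp only [Matrix.mulVecLin_apply]
      rw [← Matrix.mulVec_mulVec]
      exact hNC _ hPu
    have hLsub : L ≤ Lstar := hLmax L h1 h2
    have hx₀N : x₀ ∈ N := (hmemN x₀).mpr hx₀
    have hx₀C : x₀ ∈ LinearMap.ker C.mulVecLin := by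
      rw [LinearMap.mem_ker]
      simpa [Matrix.mulVecLin_apply] using hNC _ hx₀N
    obtain ⟨w, hw⟩ := hker hx₀C
    have hwL : w ∈ L := by
      show P.mulVec w ∈ N
      have : P.mulVec w = x₀ := by simpa [Matrix.mulVecLin_apply] using hw
      rw [this]; exact hx₀N
    have hwker : w ∈ LinearMap.ker P.mulVecLin := hLP (hLsub hwL)
    rw [LinearMap.mem_ker] at hwker
    rw [← hw, hwker]
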